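/- Let 𝓑_q be the group with presentation on generators T, X, Y, Q with relations: Q is central, TXT = X⁻¹, TY⁻¹T = Y, and Y⁻¹X⁻¹YXT² = Q⁻². Then the assignment T ↦ T, X ↦ QYX, Y ↦ Y, Q ↦ Q extends to a group automorphism τ₋ of 𝓑_q. -/
import Mathlib


/-- Generators of the elliptic braid group `𝓑_q` of type `A₁`:
`T`, `X`, `Y` and the central generator `Q` (playing the role of `q^{1/4}`). -/
inductive BqGen : Type
  | T | X | Y | Q

open FreeGroup in
/-- Relations of `𝓑_q`: `TXT = X⁻¹`, `TY⁻¹T = Y`, `Y⁻¹X⁻¹YXT² = Q⁻²`, and `Q` central. -/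
def BqRels : Set (FreeGroup BqGen) :=
  { of BqGen.T * of BqGen.X * of BqGen.T * of BqGen.X,
    of BqGen.T * (of BqGen.Y)⁻¹ * of BqGen.T * (of BqGen.Y)⁻¹,
    (of BqGen.Y)⁻¹ * (of BqGen.X)⁻¹ * of BqGen.Y * of BqGen.X * of BqGen.T * of BqGen.T *
      of BqGen.Q * of BqGen.Q,
    of BqGen.Q * of BqGen.T * (of BqGen.Q)⁻¹ * (of BqGen.T)⁻¹,
    of BqGen.Q * of BqGen.X * (of BqGen.Q)⁻¹ * (of BqGen.X)⁻¹,
    of BqGen.Q * of BqGen.Y * (of BqGen.Q)⁻¹ * (of BqGen.Y)⁻¹ }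

/-- The elliptic braid group `𝓑_q` of type `A₁`. -/
abbrev Bq : Type := PresentedGroup BqRels

namespace BqTau
open BqGen

abbrev t : Bq := PresentedGroup.of T
abbrev x : Bq := PresentedGroup.of X
abbrev y : Bq := PresentedGroup.of Y
abbrev q : Bq := PresentedGroup.of Q

lemma mk_rel {r : FreeGroup BqGen} (h : r ∈ BqRels) : PresentedGroup.mk BqRels r = 1 :=
  (QuotientGroup.eq_one_iff r).mpr (Subgroup.subset_normalClosure h)

lemma mk_of (a : BqGen) : PresentedGroup.mk BqRels (FreeGroup.of a) = PresentedGroup.of a := rfl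

lemma r1 : t * x * t * x = 1 := by
  simpa [mk_of] using mk_rel (Set.mem_insert _ _)

lemma r2 : t * y⁻¹ * t * y⁻¹ = 1 := by
  simpa [mk_of] using mk_rel (Set.mem_insert_of_mem _ (Set.mem_insert _ _))

lemma r3 : y⁻¹ * x⁻¹ * y * x * t * t * q * q = 1 := by
  simpa [mk_of] using mk_rel
    (Set.mem_insert_of_mem _ (Set.mem_insert_of_mem _ (Set.mem_insert _ _)))

lemma r4 : q * t * q⁻¹ * t⁻¹ = 1 := by
  simpa [mk_of] using mk_rel
    (Set.mem_insert_of_mem _ (Set.mem_insert_of_mem _ (Set.mem_insert_of_mem _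
      (Set.mem_insert _ _))))

lemma r5 : q * x * q⁻¹ * x⁻¹ = 1 := by
  simpa [mk_of] using mk_rel
    (Set.mem_insert_of_mem _ (Set.mem_insert_of_mem _ (Set.mem_insert_of_mem _
      (Set.mem_insert_of_mem _ (Set.mem_insert _ _)))))

lemma r6 : q * y * q⁻¹ * y⁻¹ = 1 := by
  simpa [mk_of] using mk_rel
    (Set.mem_insert_of_mem _ (Set.mem_insert_of_mem _ (Set.mem_insert_of_mem _
      (Set.mem_insert_of_mem _ (Set.mem_insert_of_mem _ rfl)))))

lemma qt : q * t = t * q := by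
  calc q * t = (q * t * q⁻¹ * t⁻¹) * (t * q) := by group
  _ = t * q := by rw [r4]; group

lemma qx : q * x = x * q := by
  calc q * x = (q * x * q⁻¹ * x⁻¹) * (x * q) := by group
  _ = x * q := by rw [r5]; group

lemma qy : q * y = y * q := by
  calc q * y = (q * y * q⁻¹ * y⁻¹) * (y * q) := by group
  _ = y * q := by rw [r6]; group

lemma hq (z : Bq) : q * z = z * q := by
  have hz : z ∈ Subgroup.centralizer {q} := by
    refine PresentedGroup.generated_by BqRels _ (fun j => ?_) z
    refine Subgroup.mem_centralizer_iff.mpr ?_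
    rintro g rfl
    cases j
    · exact qt
    · exact qx
    · exact qy
    · rfl
  exact Subgroup.mem_centralizer_iff.mp hz q rfl

lemma hqi (z : Bq) : q⁻¹ * z = z * q⁻¹ := Commute.inv_left (hq z)

lemma hxt : x * t = t⁻¹ * x⁻¹ := by
  calc x * t = t⁻¹ * (t * x * t * x) * x⁻¹ := by group
  _ = t⁻¹ * x⁻¹ := by rw [r1]; group

lemma hyt : t * y * t⁻¹ = t * t * y⁻¹ := by
  calc t * y * t⁻¹ = t * t * y⁻¹ * (t * y⁻¹ * t * y⁻¹)⁻¹ := by group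
  _ = t * t * y⁻¹ := by rw [r2]; group

lemma hty : t * y⁻¹ = y * t⁻¹ := by
  calc t * y⁻¹ = (t * y⁻¹ * t * y⁻¹) * (y * t⁻¹) := by group
  _ = y * t⁻¹ := by rw [r2]; group

lemma ht2 : t * t = x⁻¹ * y⁻¹ * x * y * q⁻¹ * q⁻¹ := by
  calc t * t = x⁻¹ * y⁻¹ * x * y * (y⁻¹ * x⁻¹ * y * x * t * t * q * q) * q⁻¹ * q⁻¹ := by group
  _ = x⁻¹ * y⁻¹ * x * y * q⁻¹ * q⁻¹ := by rw [r3]; group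

lemma hti2 : t⁻¹ * t⁻¹ = q * q * (y⁻¹ * x⁻¹ * y * x) := by
  calc t⁻¹ * t⁻¹ = (t * t)⁻¹ := by group
  _ = (x⁻¹ * y⁻¹ * x * y * q⁻¹ * q⁻¹)⁻¹ := by rw [ht2]
  _ = q * q * (y⁻¹ * x⁻¹ * y * x) := by simp [mul_inv_rev, mul_assoc]

lemma keyA' : t * y * x * t * y * x = q⁻¹ * q⁻¹ := by
  calc t * y * x * t * y * x
      = t * y * (x * t) * (y * x) := by group
  _ = t * y * (t⁻¹ * x⁻¹) * (y * x) := by rw [hxt]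
  _ = (t * y * t⁻¹) * (x⁻¹ * y * x) := by group
  _ = (t * t * y⁻¹) * (x⁻¹ * y * x) := by rw [hyt]
  _ = (t * t) * (y⁻¹ * x⁻¹ * y * x) := by group
  _ = (x⁻¹ * y⁻¹ * x * y * q⁻¹ * q⁻¹) * (y⁻¹ * x⁻¹ * y * x) := by rw [ht2]
  _ = x⁻¹ * y⁻¹ * x * y * (q⁻¹ * (q⁻¹ * (y⁻¹ * x⁻¹ * y * x))) := by group
  _ = x⁻¹ * y⁻¹ * x * y * ((q⁻¹ * (y⁻¹ * x⁻¹ * y * x)) * q⁻¹) := by rw [hqi]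
  _ = x⁻¹ * y⁻¹ * x * y * (((y⁻¹ * x⁻¹ * y * x) * q⁻¹) * q⁻¹) := by rw [hqi]
  _ = q⁻¹ * q⁻¹ := by group

lemma keyA : t * (q * y * x) * t * (q * y * x) = 1 := by
  calc t * (q * y * x) * t * (q * y * x)
      = t * (q * (y * x * t * (q * (y * x)))) := by group
  _ = t * ((y * x * t * (q * (y * x))) * q) := by rw [hq]
  _ = t * ((y * x * t * ((y * x) * q)) * q) := by rw [hq]
  _ = (t * y * x * t * y * x) * (q * q) := by group
  _ = (q⁻¹ * q⁻¹) * (q * q) := by rw [keyA']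
  _ = 1 := by group

lemma keyC : y⁻¹ * (q * y * x)⁻¹ * y * (q * y * x) * t * t * q * q = 1 := by
  calc y⁻¹ * (q * y * x)⁻¹ * y * (q * y * x) * t * t * q * q
      = y⁻¹ * x⁻¹ * y⁻¹ * (q⁻¹ * (y * q)) * (y * x * t * t * q * q) := by group
  _ = y⁻¹ * x⁻¹ * y⁻¹ * ((y * q) * q⁻¹) * (y * x * t * t * q * q) := by rw [hqi]
  _ = y⁻¹ * x⁻¹ * y * x * t * t * q * q := by group
  _ = 1 := r3

lemma keyE : q * (q * y * x) * q⁻¹ * (q * y * x)⁻¹ = 1 := by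
  calc q * (q * y * x) * q⁻¹ * (q * y * x)⁻¹
      = (q * (q * y * x)) * (q⁻¹ * (q * y * x)⁻¹) := by group
  _ = ((q * y * x) * q) * (q⁻¹ * (q * y * x)⁻¹) := by rw [hq]
  _ = 1 := by group

lemma keyA2 : t * (q⁻¹ * y⁻¹ * x) * t * (q⁻¹ * y⁻¹ * x) = 1 := by
  calc t * (q⁻¹ * y⁻¹ * x) * t * (q⁻¹ * y⁻¹ * x)
      = t * (q⁻¹ * (y⁻¹ * x * t * (q⁻¹ * (y⁻¹ * x)))) := by group
  _ = t * ((y⁻¹ * x * t * (q⁻¹ * (y⁻¹ * x))) * q⁻¹) := by rw [hqi]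
  _ = t * ((y⁻¹ * x * t * ((y⁻¹ * x) * q⁻¹)) * q⁻¹) := by rw [hqi]
  _ = (t * y⁻¹) * (x * t) * (y⁻¹ * x) * (q⁻¹ * q⁻¹) := by group
  _ = (y * t⁻¹) * (x * t) * (y⁻¹ * x) * (q⁻¹ * q⁻¹) := by rw [hty]
  _ = (y * t⁻¹) * (t⁻¹ * x⁻¹) * (y⁻¹ * x) * (q⁻¹ * q⁻¹) := by rw [hxt]
  _ = y * (t⁻¹ * t⁻¹) * (x⁻¹ * y⁻¹ * x) * (q⁻¹ * q⁻¹) := by group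
  _ = y * (q * q * (y⁻¹ * x⁻¹ * y * x)) * (x⁻¹ * y⁻¹ * x) * (q⁻¹ * q⁻¹) := by rw [hti2]
  _ = y * (q * (q * y⁻¹)) * (q⁻¹ * q⁻¹) := by group
  _ = y * ((q * y⁻¹) * q) * (q⁻¹ * q⁻¹) := by rw [hq]
  _ = y * ((y⁻¹ * q) * q) * (q⁻¹ * q⁻¹) := by rw [hq]
  _ = 1 := by group

lemma keyC2 : y⁻¹ * (q⁻¹ * y⁻¹ * x)⁻¹ * y * (q⁻¹ * y⁻¹ * x) * t * t * q * q = 1 := by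
  calc y⁻¹ * (q⁻¹ * y⁻¹ * x)⁻¹ * y * (q⁻¹ * y⁻¹ * x) * t * t * q * q
      = y⁻¹ * x⁻¹ * y * (q * (y * q⁻¹)) * (y⁻¹ * x * t * t * q * q) := by group
  _ = y⁻¹ * x⁻¹ * y * ((y * q⁻¹) * q) * (y⁻¹ * x * t * t * q * q) := by rw [hq]
  _ = y⁻¹ * x⁻¹ * y * x * t * t * q * q := by group
  _ = 1 := r3

lemma keyE2 : q * (q⁻¹ * y⁻¹ * x) * q⁻¹ * (q⁻¹ * y⁻¹ * x)⁻¹ = 1 := by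
  calc q * (q⁻¹ * y⁻¹ * x) * q⁻¹ * (q⁻¹ * y⁻¹ * x)⁻¹
      = (q * (q⁻¹ * y⁻¹ * x)) * (q⁻¹ * (q⁻¹ * y⁻¹ * x)⁻¹) := by group
  _ = ((q⁻¹ * y⁻¹ * x) * q) * (q⁻¹ * (q⁻¹ * y⁻¹ * x)⁻¹) := by rw [hq]
  _ = 1 := by group

lemma invXf : q * y * (q⁻¹ * y⁻¹ * x) = x := by
  calc q * y * (q⁻¹ * y⁻¹ * x)
      = q * (y * (q⁻¹ * (y⁻¹ * x))) := by group
  _ = (y * (q⁻¹ * (y⁻¹ * x))) * q := by rw [hq]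
  _ = y * (q⁻¹ * ((y⁻¹ * x) * q)) := by group
  _ = y * (((y⁻¹ * x) * q) * q⁻¹) := by rw [hqi]
  _ = x := by group

lemma invXg : q⁻¹ * y⁻¹ * (q * y * x) = x := by
  calc q⁻¹ * y⁻¹ * (q * y * x)
      = q⁻¹ * (y⁻¹ * (q * (y * x))) := by group
  _ = q⁻¹ * (y⁻¹ * ((y * x) * q)) := by rw [hq]
  _ = q⁻¹ * (x * q) := by group
  _ = (x * q) * q⁻¹ := by rw [hqi]
  _ = x := by group

def fmap : BqGen → Bq
  | T => t
  | X => q * y * x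
  | Y => y
  | Q => q

def gmap : BqGen → Bq
  | T => t
  | X => q⁻¹ * y⁻¹ * x
  | Y => y
  | Q => q

lemma hf : ∀ r ∈ BqRels, FreeGroup.lift fmap r = 1 := by
  intro r hr
  simp only [BqRels, Set.mem_insert_iff, Set.mem_singleton_iff] at hr
  rcases hr with rfl | rfl | rfl | rfl | rfl | rfl <;>
    simp only [map_mul, map_inv, FreeGroup.lift_apply_of, fmap]
  · exact keyA
  · exact r2
  · exact keyC
  · exact r4
  · exact keyE
  · exact r6

lemma hg : ∀ r ∈ BqRels, FreeGroup.lift gmap r = 1 := by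
  intro r hr
  simp only [BqRels, Set.mem_insert_iff, Set.mem_singleton_iff] at hr
  rcases hr with rfl | rfl | rfl | rfl | rfl | rfl <;>
    simp only [map_mul, map_inv, FreeGroup.lift_apply_of, gmap]
  · exact keyA2
  · exact r2
  · exact keyC2
  · exact r4
  · exact keyE2
  · exact r6

def F : Bq →* Bq := PresentedGroup.toGroup hf
def G : Bq →* Bq := PresentedGroup.toGroup hg

lemma hGF : G.comp F = MonoidHom.id Bq := by
  ext j
  cases j <;>
    simp only [MonoidHom.comp_apply, MonoidHom.id_apply, F, G,
      PresentedGroup.toGroup.of, fmap, gmap, map_mul, map_inv]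
  exact invXf

lemma hFG : F.comp G = MonoidHom.id Bq := by
  ext j
  cases j <;>
    simp only [MonoidHom.comp_apply, MonoidHom.id_apply, F, G,
      PresentedGroup.toGroup.of, fmap, gmap, map_mul, map_inv]
  exact invXg

end BqTau

/-- The assignment `T ↦ T`, `X ↦ QYX`, `Y ↦ Y`, `Q ↦ Q` extends to a group
automorphism `τ₋` of the elliptic braid group `𝓑_q`. -/
theorem tau_minus_automorphism :
    ∃ τm : Bq ≃* Bq,
      τm (PresentedGroup.of BqGen.T) = PresentedGroup.of BqGen.T ∧
      τm (PresentedGroup.of BqGen.X) =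
          PresentedGroup.of BqGen.Q * PresentedGroup.of BqGen.Y *
            PresentedGroup.of BqGen.X ∧
      τm (PresentedGroup.of BqGen.Y) = PresentedGroup.of BqGen.Y ∧
      τm (PresentedGroup.of BqGen.Q) = PresentedGroup.of BqGen.Q := by
  refine ⟨BqTau.F.toMulEquiv BqTau.G BqTau.hGF BqTau.hFG, ?_, ?_, ?_, ?_⟩ <;>
    simp only [MonoidHom.toMulEquiv, MulEquiv.coe_mk, Equiv.coe_fn_mk, BqTau.F,
      PresentedGroup.toGroup.of, BqTau.fmap]
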